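/- Let R be a commutative ring. The map ν : R((u))((t))* × R((u))((t))* → ℤ(R) defined by ν(f,g) = ν₂(f)ν₁(g) − ν₁(f)ν₂(g) (the 2×2 determinant of the pairs (ν₂,ν₁)) is bimultiplicative and satisfies the Steinberg relation ν(f, 1−f) = 0 whenever both f and 1−f are units. -/

import Mathlib

namespace CC

variable {R : Type*} [CommRing R]

/-- The constant embedding `R → R((u))((t))`. -/
noncomputable def CConst (R : Type*) [CommRing R] : R →+* LaurentSeries (LaurentSeries R) :=
  (HahnSeries.C : LaurentSeries R →+* LaurentSeries (LaurentSeries R)).comp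
    (HahnSeries.C : R →+* LaurentSeries R)

/-- `y` lies in `𝔭(R)`: supported in bidegrees `(i,j) < (0,0)` (lexicographically) with all
coefficients nilpotent. -/
def InPP (y : LaurentSeries (LaurentSeries R)) : Prop :=
  (∀ s : ℤ, 0 < s → y.coeff s = 0) ∧
  (∀ w : ℤ, 0 ≤ w → (y.coeff 0).coeff w = 0) ∧
  (∀ s w : ℤ, IsNilpotent ((y.coeff s).coeff w))

/-- `y` lies in `𝔪(R)`: supported in bidegrees `(i,j) > (0,0)` (lexicographically). -/
def InMM (y : LaurentSeries (LaurentSeries R)) : Prop :=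
  (∀ s : ℤ, s < 0 → y.coeff s = 0) ∧ (∀ w : ℤ, w ≤ 0 → (y.coeff 0).coeff w = 0)

open HahnSeries Finset

/-- The leading-position predicate: all bidegree coefficients lex-below `(j,i)` are nilpotent,
and the coefficient at `(j,i)` is a unit. -/
def Lead (f : LaurentSeries (LaurentSeries R)) (j i : ℤ) : Prop :=
  (∀ s w : ℤ, (s < j ∨ (s = j ∧ w < i)) → IsNilpotent ((f.coeff s).coeff w)) ∧
  IsUnit ((f.coeff j).coeff i)

lemma coeff_sum {ι : Type*} (t : Finset ι) (F : ι → LaurentSeries R) (w : ℤ) :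
    (∑ x ∈ t, F x).coeff w = ∑ x ∈ t, (F x).coeff w :=
  map_sum (HahnSeries.coeff.addMonoidHom w) F t

lemma nil_mul_left {x y : LaurentSeries R} (hx : ∀ w, IsNilpotent (x.coeff w)) (w : ℤ) :
    IsNilpotent ((x * y).coeff w) := by
  rw [HahnSeries.coeff_mul]
  exact isNilpotent_sum fun p _ => (Commute.all _ _).isNilpotent_mul_right (hx p.1)

lemma nil_mul_right {x y : LaurentSeries R} (hy : ∀ w, IsNilpotent (y.coeff w)) (w : ℤ) :
    IsNilpotent ((x * y).coeff w) := by
  rw [HahnSeries.coeff_mul]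
  exact isNilpotent_sum fun p _ => (Commute.all _ _).isNilpotent_mul_left (hy p.2)

lemma lead_mul_nil {f g : LaurentSeries (LaurentSeries R)} {j i j' i' : ℤ}
    (hf : Lead f j i) (hg : Lead g j' i') {s w : ℤ}
    (hsw : s < j + j' ∨ (s = j + j' ∧ w < i + i')) :
    IsNilpotent (((f * g).coeff s).coeff w) := by
  rw [HahnSeries.coeff_mul, coeff_sum]
  refine isNilpotent_sum fun p hp => ?_
  obtain ⟨-, -, hpsum⟩ := mem_addAntidiagonal.mp hp
  by_cases h1 : p.1 < j
  · exact nil_mul_left (fun w' => hf.1 p.1 w' (Or.inl h1)) w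
  by_cases h2 : p.2 < j'
  · exact nil_mul_right (fun w' => hg.1 p.2 w' (Or.inl h2)) w
  have hp1 : p.1 = j ∧ p.2 = j' ∧ w < i + i' := by omega
  obtain ⟨e1, e2, hw⟩ := hp1
  rw [e1, e2, HahnSeries.coeff_mul]
  refine isNilpotent_sum fun q hq => ?_
  obtain ⟨-, -, hqsum⟩ := mem_addAntidiagonal.mp hq
  by_cases hq1 : q.1 < i
  · exact (Commute.all _ _).isNilpotent_mul_right (hf.1 j q.1 (Or.inr ⟨rfl, hq1⟩))
  · exact (Commute.all _ _).isNilpotent_mul_left (hg.1 j' q.2 (Or.inr ⟨rfl, by omega⟩))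

lemma lead_mul [Nontrivial R] {f g : LaurentSeries (LaurentSeries R)} {j i j' i' : ℤ}
    (hf : Lead f j i) (hg : Lead g j' i') : Lead (f * g) (j + j') (i + i') := by
  refine ⟨fun s w hsw => lead_mul_nil hf hg hsw, ?_⟩
  -- the coefficient at (j+j', i+i') is unit + nilpotent
  have hfne : f.coeff j ≠ 0 := fun h => by
    have := hf.2; rw [h] at this; simpa using this.ne_zero
  have hgne : g.coeff j' ≠ 0 := fun h => by
    have := hg.2; rw [h] at this; simpa using this.ne_zero
  have hmem : ((j, j') : ℤ × ℤ) ∈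
      Finset.antidiagonal f.isPWO_support g.isPWO_support (j + j') :=
    mem_addAntidiagonal.mpr ⟨hfne, hgne, rfl⟩
  rw [HahnSeries.coeff_mul, coeff_sum, ← Finset.add_sum_erase _ _ hmem]
  refine IsNilpotent.isUnit_add_left_of_commute ?_ ?_ (Commute.all _ _)
  · refine isNilpotent_sum fun p hp => ?_
    obtain ⟨hpne, hp'⟩ := Finset.mem_erase.mp hp
    obtain ⟨-, -, hpsum⟩ := mem_addAntidiagonal.mp hp'
    have : p.1 < j ∨ p.2 < j' := by
      rcases lt_trichotomy p.1 j with h | h | h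
      · exact Or.inl h
      · exact absurd (Prod.ext h (by omega)) hpne
      · right; omega
    rcases this with h | h
    · exact nil_mul_left (fun w' => hf.1 p.1 w' (Or.inl h)) _
    · exact nil_mul_right (fun w' => hg.1 p.2 w' (Or.inl h)) _
  · -- inner level
    have hfne' : (f.coeff j).coeff i ≠ 0 := hf.2.ne_zero
    have hgne' : (g.coeff j').coeff i' ≠ 0 := hg.2.ne_zero
    have hmem' : ((i, i') : ℤ × ℤ) ∈
        Finset.antidiagonal (f.coeff j).isPWO_support (g.coeff j').isPWO_support (i + i') :=
      mem_addAntidiagonal.mpr ⟨hfne', hgne', rfl⟩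
    rw [HahnSeries.coeff_mul, ← Finset.add_sum_erase _ _ hmem']
    refine IsNilpotent.isUnit_add_left_of_commute ?_ (hf.2.mul hg.2) (Commute.all _ _)
    refine isNilpotent_sum fun q hq => ?_
    obtain ⟨hqne, hq'⟩ := Finset.mem_erase.mp hq
    obtain ⟨-, -, hqsum⟩ := mem_addAntidiagonal.mp hq'
    have : q.1 < i ∨ q.2 < i' := by
      rcases lt_trichotomy q.1 i with h | h | h
      · exact Or.inl h
      · exact absurd (Prod.ext h (by omega)) hqne
      · right; omega
    rcases this with h | h
    · exact (Commute.all _ _).isNilpotent_mul_right (hf.1 j q.1 (Or.inr ⟨rfl, h⟩))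
    · exact (Commute.all _ _).isNilpotent_mul_left (hg.1 j' q.2 (Or.inr ⟨rfl, h⟩))

lemma lead_unique [Nontrivial R] {f : LaurentSeries (LaurentSeries R)} {j i j' i' : ℤ}
    (hf : Lead f j i) (hg : Lead f j' i') : j = j' ∧ i = i' := by
  have key : ∀ (a b a' b' : ℤ), Lead f a b → Lead f a' b' →
      (a < a' ∨ (a = a' ∧ b < b')) → False := by
    intro a b a' b' h1 h2 hlt
    exact (h2.1 a b hlt).not_isUnit h1.2
  constructor
  · rcases lt_trichotomy j j' with h | h | h
    · exact absurd (key j i j' i' hf hg (Or.inl h)) id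
    · exact h
    · exact absurd (key j' i' j i hg hf (Or.inl h)) id
  · have hj : j = j' := by
      rcases lt_trichotomy j j' with h | h | h
      · exact absurd (key j i j' i' hf hg (Or.inl h)) id
      · exact h
      · exact absurd (key j' i' j i hg hf (Or.inl h)) id
    subst hj
    rcases lt_trichotomy i i' with h | h | h
    · exact absurd (key j i j i' hf hg (Or.inr ⟨rfl, h⟩)) id
    · exact h
    · exact absurd (key j i' j i hg hf (Or.inr ⟨rfl, h⟩)) id


lemma one_coeff2 (s w : ℤ) :
    ((1 : LaurentSeries (LaurentSeries R)).coeff s).coeff w =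
      if s = 0 ∧ w = 0 then 1 else 0 := by
  rw [HahnSeries.coeff_one]
  by_cases hs : s = 0
  · subst hs
    rw [if_pos rfl, HahnSeries.coeff_one]
    by_cases hw : w = 0 <;> simp [hw]
  · rw [if_neg hs]
    simp [hs]

lemma lead_of_inPP {x : LaurentSeries (LaurentSeries R)} (h : InPP (x - 1)) : Lead x 0 0 := by
  obtain ⟨-, -, h3⟩ := h
  have e : ∀ s w : ℤ, (x.coeff s).coeff w =
      ((x - 1).coeff s).coeff w + ((1 : LaurentSeries (LaurentSeries R)).coeff s).coeff w := by
    intro s w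
    rw [HahnSeries.coeff_sub, HahnSeries.coeff_sub]; ring
  constructor
  · intro s w hsw
    rw [e s w]
    have h0 : ((1 : LaurentSeries (LaurentSeries R)).coeff s).coeff w = 0 := by
      rw [one_coeff2, if_neg (by omega)]
    rw [h0, add_zero]
    exact h3 s w
  · rw [e 0 0, one_coeff2, if_pos ⟨rfl, rfl⟩]
    exact (h3 0 0).isUnit_add_one

lemma lead_of_inMM {x : LaurentSeries (LaurentSeries R)} (h : InMM (x - 1)) : Lead x 0 0 := by
  obtain ⟨h1, h2⟩ := h
  have e : ∀ s w : ℤ, (x.coeff s).coeff w =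
      ((x - 1).coeff s).coeff w + ((1 : LaurentSeries (LaurentSeries R)).coeff s).coeff w := by
    intro s w
    rw [HahnSeries.coeff_sub, HahnSeries.coeff_sub]; ring
  constructor
  · intro s w hsw
    rw [e s w]
    rw [one_coeff2, if_neg (by omega)]
    rcases hsw with h | ⟨rfl, h⟩
    · rw [h1 s h]
      simp
    · rw [h2 w (by omega)]
      simp
  · rw [e 0 0, h2 0 le_rfl, one_coeff2]
    simp

lemma lead_single (a : Rˣ) (j i : ℤ) :
    Lead (CConst R (a : R) * HahnSeries.single j (HahnSeries.single i (1 : R))) j i := by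
  have e : CConst R (a : R) * HahnSeries.single j (HahnSeries.single i (1 : R)) =
      HahnSeries.single j (HahnSeries.single i (a : R)) := by
    show HahnSeries.C (HahnSeries.C (a : R)) * _ = _
    rw [HahnSeries.C_apply, HahnSeries.C_apply, HahnSeries.single_mul_single,
      HahnSeries.single_mul_single, zero_add, zero_add, mul_one]
  rw [e]
  constructor
  · intro s w hsw
    rcases hsw with h | ⟨rfl, h⟩
    · rw [HahnSeries.coeff_single_of_ne (by omega)]
      simp
    · rw [HahnSeries.coeff_single_same, HahnSeries.coeff_single_of_ne (by omega)]
      simp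
  · rw [HahnSeries.coeff_single_same, HahnSeries.coeff_single_same]
    exact a.isUnit

lemma lead_one_sub_neg {f : LaurentSeries (LaurentSeries R)} {j i : ℤ} (hf : Lead f j i)
    (hji : j < 0 ∨ (j = 0 ∧ i < 0)) : Lead (1 - f) j i := by
  have e : ∀ s w : ℤ, (s < 0 ∨ (s = 0 ∧ w < 0)) →
      ((1 - f : LaurentSeries (LaurentSeries R)).coeff s).coeff w = -((f.coeff s).coeff w) := by
    intro s w hsw
    rw [HahnSeries.coeff_sub, HahnSeries.coeff_sub]
    rw [one_coeff2, if_neg (by omega)]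
    ring
  constructor
  · intro s w hsw
    rw [e s w (by omega)]
    exact (hf.1 s w hsw).neg
  · rw [e j i (by omega)]
    exact hf.2.neg

lemma lead_one_sub_pos {f : LaurentSeries (LaurentSeries R)} {j i : ℤ} (hf : Lead f j i)
    (hji : 0 < j ∨ (j = 0 ∧ 0 < i)) : Lead (1 - f) 0 0 := by
  constructor
  · intro s w hsw
    have hn := hf.1 s w (by omega)
    have e : ((1 - f : LaurentSeries (LaurentSeries R)).coeff s).coeff w =
        -((f.coeff s).coeff w) := by
      rw [HahnSeries.coeff_sub, HahnSeries.coeff_sub]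
      rw [one_coeff2, if_neg (by omega)]
      ring
    rw [e]
    exact hn.neg
  · have hn := hf.1 0 0 (by omega)
    have e : ((1 - f : LaurentSeries (LaurentSeries R)).coeff 0).coeff 0 =
        1 - (f.coeff 0).coeff 0 := by
      rw [HahnSeries.coeff_sub, HahnSeries.coeff_sub, one_coeff2, if_pos ⟨rfl, rfl⟩]
    rw [e]
    exact hn.isUnit_one_sub

/-- **Bimultiplicativity and the Steinberg relation for `ν(·,·)`.**
Let `R` be a connected commutative ring and let `ν₁, ν₂ : R((u))((t))* → ℤ` be the two order
maps, characterized by the canonical decomposition `f = f₋₁ · f₀ · u^{ν₂(f)} t^{ν₁(f)} · f₁`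
with `f₋₁ ∈ 1 + 𝔭(R)`, `f₀ ∈ R*`, `f₁ ∈ 1 + 𝔪(R)`.  Then
`ν(f,g) = ν₂(f)ν₁(g) − ν₁(f)ν₂(g)` is bimultiplicative and satisfies the Steinberg relation
`ν(f, 1−f) = 0` whenever both `f` and `1−f` are units. -/
theorem nu_bimultiplicative_steinberg
    (hconn : ∀ e : R, e * e = e → e = 0 ∨ e = 1)
    (ν₁ ν₂ : (LaurentSeries (LaurentSeries R))ˣ → ℤ)
    (hdec : ∀ f : (LaurentSeries (LaurentSeries R))ˣ,
      ∃ (fm fp : LaurentSeries (LaurentSeries R)) (f0 : Rˣ),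
        InPP (fm - 1) ∧ InMM (fp - 1) ∧
        (f : LaurentSeries (LaurentSeries R)) =
          fm * CConst R (f0 : R) *
            HahnSeries.single (ν₁ f) (HahnSeries.single (ν₂ f) (1 : R)) * fp) :
    (∀ f f' g : (LaurentSeries (LaurentSeries R))ˣ,
        ν₂ (f * f') * ν₁ g - ν₁ (f * f') * ν₂ g =
          (ν₂ f * ν₁ g - ν₁ f * ν₂ g) + (ν₂ f' * ν₁ g - ν₁ f' * ν₂ g)) ∧
    (∀ f g g' : (LaurentSeries (LaurentSeries R))ˣ,
        ν₂ f * ν₁ (g * g') - ν₁ f * ν₂ (g * g') =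
          (ν₂ f * ν₁ g - ν₁ f * ν₂ g) + (ν₂ f * ν₁ g' - ν₁ f * ν₂ g')) ∧
    (∀ f g : (LaurentSeries (LaurentSeries R))ˣ,
        (f : LaurentSeries (LaurentSeries R)) + (g : LaurentSeries (LaurentSeries R)) = 1 →
        ν₂ f * ν₁ g - ν₁ f * ν₂ g = 0) := by
  rcases subsingleton_or_nontrivial R with hR | hR
  · have h1 : Subsingleton (LaurentSeries R) :=
      ⟨fun a b => by ext; exact Subsingleton.elim _ _⟩
    have h2 : Subsingleton (LaurentSeries (LaurentSeries R)) :=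
      ⟨fun a b => by ext; exact Subsingleton.elim _ _⟩
    have hu : ∀ a b : (LaurentSeries (LaurentSeries R))ˣ, a = b :=
      fun a b => Units.ext (Subsingleton.elim _ _)
    refine ⟨fun f f' g => ?_, fun f g g' => ?_, fun f g _ => ?_⟩
    · rw [hu (f * f') g, hu f g, hu f' g]; ring
    · rw [hu (g * g') f, hu g f, hu g' f]; ring
    · rw [hu f g]; ring
  · have lead : ∀ f : (LaurentSeries (LaurentSeries R))ˣ,
        Lead (f : LaurentSeries (LaurentSeries R)) (ν₁ f) (ν₂ f) := by
      intro f
      obtain ⟨fm, fp, f0, hPP, hMM, heq⟩ := hdec f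
      have h1 := lead_of_inPP hPP
      have h2 := lead_single f0 (ν₁ f) (ν₂ f)
      have h3 := lead_of_inMM hMM
      have h4 := lead_mul (lead_mul h1 h2) h3
      rw [mul_assoc fm (CConst R (f0 : R)) (HahnSeries.single (ν₁ f)
        (HahnSeries.single (ν₂ f) (1 : R)))] at heq
      rw [heq]
      simpa using h4
    have add1 : ∀ f g : (LaurentSeries (LaurentSeries R))ˣ,
        ν₁ (f * g) = ν₁ f + ν₁ g ∧ ν₂ (f * g) = ν₂ f + ν₂ g := by
      intro f g
      have h1 := lead (f * g)
      rw [Units.val_mul] at h1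
      exact lead_unique h1 (lead_mul (lead f) (lead g))
    refine ⟨fun f f' g => ?_, fun f g g' => ?_, fun f g hsum => ?_⟩
    · obtain ⟨e1, e2⟩ := add1 f f'
      rw [e1, e2]; ring
    · obtain ⟨e1, e2⟩ := add1 g g'
      rw [e1, e2]; ring
    · have hg : (g : LaurentSeries (LaurentSeries R)) =
          1 - (f : LaurentSeries (LaurentSeries R)) := by rw [← hsum]; ring
      have hf := lead f
      rcases lt_trichotomy (ν₁ f) 0 with hj | hj | hj
      · have h := lead_unique (lead g) (by rw [hg]; exact lead_one_sub_neg hf (Or.inl hj))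
        rw [h.1, h.2]; ring
      · rcases lt_trichotomy (ν₂ f) 0 with hi | hi | hi
        · have h := lead_unique (lead g)
            (by rw [hg]; exact lead_one_sub_neg hf (Or.inr ⟨hj, hi⟩))
          rw [h.1, h.2]; ring
        · rw [hj, hi]; ring
        · have h := lead_unique (lead g)
            (by rw [hg]; exact lead_one_sub_pos hf (Or.inr ⟨hj, hi⟩))
          rw [h.1, h.2]; ring
      · have h := lead_unique (lead g) (by rw [hg]; exact lead_one_sub_pos hf (Or.inl hj))
        rw [h.1, h.2]; ring


end CC
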